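/- (Remark: the Auslander–Szczarba example has no Spin structure.) Let A be the 5×5 Bott matrix whose rows are (0,0,1,1,0), (0,0,0,1,1), (0,0,0,0,0), (0,0,0,0,0), (0,0,0,0,0). Then there exists no group homomorphism ε from Γ(A) to the group of units of Cl_5 satisfying ε(s_1) ∈ {ι(e_3)ι(e_4), −ι(e_3)ι(e_4)} and ε(s_2) ∈ {ι(e_4)ι(e_5), −ι(e_4)ι(e_5)}. -/

import Mathlib

noncomputable section

open Matrix

/-- The Euclidean group `E(n)`: pairs `(M, b)` with `M ∈ O(n)`, `b ∈ ℝⁿ`,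
acting on `ℝⁿ` by `x ↦ M x + b`. -/
@[ext]
structure EuclideanGroup (n : ℕ) where
  M : Matrix.orthogonalGroup (Fin n) ℝ
  b : Fin n → ℝ

namespace EuclideanGroup

variable {n : ℕ}

instance : Mul (EuclideanGroup n) :=
  ⟨fun g h => ⟨g.M * h.M, (g.M : Matrix (Fin n) (Fin n) ℝ) *ᵥ h.b + g.b⟩⟩

instance : One (EuclideanGroup n) := ⟨⟨1, 0⟩⟩

instance : Inv (EuclideanGroup n) :=
  ⟨fun g => ⟨g.M⁻¹, -(star (g.M : Matrix (Fin n) (Fin n) ℝ) *ᵥ g.b)⟩⟩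

@[simp] theorem mul_M (g h : EuclideanGroup n) : (g * h).M = g.M * h.M := rfl
@[simp] theorem mul_b (g h : EuclideanGroup n) :
    (g * h).b = (g.M : Matrix (Fin n) (Fin n) ℝ) *ᵥ h.b + g.b := rfl
@[simp] theorem one_M : (1 : EuclideanGroup n).M = 1 := rfl
@[simp] theorem one_b : (1 : EuclideanGroup n).b = 0 := rfl
@[simp] theorem inv_M (g : EuclideanGroup n) : g⁻¹.M = g.M⁻¹ := rfl
@[simp] theorem inv_b (g : EuclideanGroup n) :
    g⁻¹.b = -(star (g.M : Matrix (Fin n) (Fin n) ℝ) *ᵥ g.b) := rfl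

instance : Group (EuclideanGroup n) where
  mul_assoc a b c :=
    EuclideanGroup.ext (mul_assoc _ _ _)
      (by simp [Matrix.mulVec_add, Matrix.mulVec_mulVec, add_assoc])
  one_mul a := by ext <;> simp
  mul_one a := by ext <;> simp
  inv_mul_cancel a :=
    EuclideanGroup.ext (inv_mul_cancel _) (by exact add_neg_cancel _)

end EuclideanGroup


/-- A Bott matrix: a strictly upper triangular binary matrix
(entries `0` or `1`, and `A i j = 0` whenever `j ≤ i`). -/
def IsBottMatrix {n : ℕ} (A : Matrix (Fin n) (Fin n) ℕ) : Prop :=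
  (∀ i j : Fin n, A i j = 0 ∨ A i j = 1) ∧ ∀ i j : Fin n, (j : ℕ) ≤ (i : ℕ) → A i j = 0

/-- The diagonal matrix `D_i` with `(k,k)`-entry `(-1) ^ (A i k)`. -/
def Dmat {n : ℕ} (A : Matrix (Fin n) (Fin n) ℕ) (i : Fin n) : Matrix (Fin n) (Fin n) ℝ :=
  Matrix.diagonal fun k => (-1 : ℝ) ^ (A i k)

theorem diagonal_pm_mem_orthogonalGroup {n : ℕ} (d : Fin n → ℝ)
    (hd : ∀ k, d k = 1 ∨ d k = -1) :
    Matrix.diagonal d ∈ Matrix.orthogonalGroup (Fin n) ℝ := by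
  rw [Matrix.mem_orthogonalGroup_iff]
  have : star (Matrix.diagonal d) = Matrix.diagonal d := by
    simp [Matrix.star_eq_conjTranspose, Matrix.diagonal_conjTranspose]
  rw [Matrix.diagonal_transpose, Matrix.diagonal_mul_diagonal]
  have h1 : (fun k => d k * d k) = fun _ => (1 : ℝ) :=
    funext fun k => by rcases hd k with h | h <;> simp [h]
  rw [h1, Matrix.diagonal_one]

theorem Dmat_mem {n : ℕ} (A : Matrix (Fin n) (Fin n) ℕ) (i : Fin n) :
    Dmat A i ∈ Matrix.orthogonalGroup (Fin n) ℝ := by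
  refine diagonal_pm_mem_orthogonalGroup _ fun k => ?_
  rcases Nat.even_or_odd (A i k) with h | h
  · exact Or.inl (h.neg_one_pow)
  · exact Or.inr (h.neg_one_pow)

/-- `D_i` as an element of the orthogonal group. -/
def Dorth {n : ℕ} (A : Matrix (Fin n) (Fin n) ℕ) (i : Fin n) :
    Matrix.orthogonalGroup (Fin n) ℝ :=
  ⟨Dmat A i, Dmat_mem A i⟩

/-- The generators `s_i` of the Bieberbach group of the real Bott manifold `M(A)`:
for `i` with `i + 1 < n` (i.e. the mathematical indices `1 ≤ i ≤ n - 1`),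
`s_i = (D_i, (1/2) e_i)`, and the last generator (mathematical index `n`) is
`s_n = (I, e_n)`.  (Indices are `0`-based.) -/
def sgen {n : ℕ} (A : Matrix (Fin n) (Fin n) ℕ) (i : Fin n) : EuclideanGroup n :=
  if (i : ℕ) + 1 = n then ⟨1, Pi.single i 1⟩
  else ⟨Dorth A i, Pi.single i (1 / 2 : ℝ)⟩

/-- The fundamental group `Γ(A)` of the real Bott manifold `M(A)`, as the subgroup
of `E(n)` generated by `s_1, …, s_n`. -/
def BottGroup {n : ℕ} (A : Matrix (Fin n) (Fin n) ℕ) : Subgroup (EuclideanGroup n) :=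
  Subgroup.closure (Set.range (sgen A))

theorem sgen_mem {n : ℕ} (A : Matrix (Fin n) (Fin n) ℕ) (i : Fin n) :
    sgen A i ∈ BottGroup A :=
  Subgroup.subset_closure (Set.mem_range_self i)

/-- The homomorphism sending an affine isometry `(M, b)` to its linear part `M`. -/
def linearPart (n : ℕ) : EuclideanGroup n →* Matrix.orthogonalGroup (Fin n) ℝ where
  toFun g := g.M
  map_one' := rfl
  map_mul' _ _ := rfl

/-- The standard positive definite quadratic form `Q(x) = x₁² + ⋯ + xₙ²` on `ℝⁿ`. -/
def Qstd (n : ℕ) : QuadraticForm ℝ (Fin n → ℝ) :=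
  QuadraticMap.weightedSumSquares ℝ (fun _ : Fin n => (1 : ℝ))

/-- The Clifford algebra `Cl_n` of `Q(x) = x₁² + ⋯ + xₙ²`. -/
abbrev Cl (n : ℕ) := CliffordAlgebra (Qstd n)

/-- For a finite set `S = {s₁ < s₂ < ⋯ < s_k} ⊆ {1, …, n}`, the product
`e_S = ι(e_{s₁}) ι(e_{s₂}) ⋯ ι(e_{s_k})` in `Cl_n` (with `e_∅ = 1`). -/
def eProd {n : ℕ} (S : Finset (Fin n)) : Cl n :=
  ((S.sort (· ≤ ·)).map fun j => CliffordAlgebra.ι (Qstd n) (Pi.single j 1)).prod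



theorem Qstd_single (i : Fin 5) : Qstd 5 (Pi.single i 1) = 1 := by
  simp [Qstd, QuadraticMap.weightedSumSquares_apply, Pi.single_apply, Fin.sum_univ_five]

theorem polar_single (i j : Fin 5) (h : i ≠ j) :
    QuadraticMap.polar (Qstd 5) (Pi.single i 1) (Pi.single j 1) = 0 := by
  simp [QuadraticMap.polar, Qstd, QuadraticMap.weightedSumSquares_apply, Pi.single_apply,
    Fin.sum_univ_five]
  fin_cases i <;> fin_cases j <;> simp_all

theorem anticomm_single (i j : Fin 5) (h : i ≠ j) :
    CliffordAlgebra.ι (Qstd 5) (Pi.single i 1) * CliffordAlgebra.ι (Qstd 5) (Pi.single j 1)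
      = -(CliffordAlgebra.ι (Qstd 5) (Pi.single j 1) * CliffordAlgebra.ι (Qstd 5) (Pi.single i 1)) := by
  have h0 := CliffordAlgebra.ι_mul_ι_add_swap (Q := Qstd 5) (Pi.single i 1) (Pi.single j 1)
  rw [polar_single i j h, map_zero] at h0
  exact eq_neg_of_add_eq_zero_left h0

theorem sq_single (i : Fin 5) :
    CliffordAlgebra.ι (Qstd 5) (Pi.single i 1) * CliffordAlgebra.ι (Qstd 5) (Pi.single i 1) = 1 := by
  rw [CliffordAlgebra.ι_sq_scalar, Qstd_single]
  exact (algebraMap ℝ (Cl 5)).map_one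

/-- The Bott matrix of the Auslander–Szczarba example. -/
def Aas : Matrix (Fin 5) (Fin 5) ℕ :=
  !![0,0,1,1,0; 0,0,0,1,1; 0,0,0,0,0; 0,0,0,0,0; 0,0,0,0,0]

theorem sgen_comm : sgen Aas 0 * sgen Aas 1 = sgen Aas 1 * sgen Aas 0 := by
  have h0 : sgen Aas (0 : Fin 5) = ⟨Dorth Aas 0, Pi.single (0 : Fin 5) (1 / 2 : ℝ)⟩ := by
    simp [sgen]
  have h1 : sgen Aas (1 : Fin 5) = ⟨Dorth Aas 1, Pi.single (1 : Fin 5) (1 / 2 : ℝ)⟩ := by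
    simp [sgen]
  rw [h0, h1]
  have hM : Dorth Aas 0 * Dorth Aas 1 = Dorth Aas 1 * Dorth Aas 0 := by
    apply Subtype.ext
    show Dmat Aas 0 * Dmat Aas 1 = Dmat Aas 1 * Dmat Aas 0
    simp [Dmat, Matrix.diagonal_mul_diagonal, mul_comm]
  have hb : Dmat Aas 0 *ᵥ Pi.single (1 : Fin 5) (1/2 : ℝ) + Pi.single (0 : Fin 5) (1/2 : ℝ)
      = Dmat Aas 1 *ᵥ Pi.single (0 : Fin 5) (1/2 : ℝ) + Pi.single (1 : Fin 5) (1/2 : ℝ) := by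
    funext k
    simp only [Dmat, Matrix.mulVec_single, Pi.add_apply, Pi.single_apply]
    fin_cases k <;> simp [Aas, Matrix.diagonal_apply]
  exact EuclideanGroup.ext hM hb

/-- Remark.  The Auslander–Szczarba real Bott manifold has no Spin
structure: no group homomorphism `ε : Γ(A) → Cl₅ˣ` satisfies `ε(s₁) = ± ι(e₃) ι(e₄)` and
`ε(s₂) = ± ι(e₄) ι(e₅)` (indices `0`-based below). -/
theorem auslander_szczarba_no_spin :
    ¬∃ ε : BottGroup Aas →* (Cl 5)ˣ,
      (((ε ⟨sgen Aas 0, sgen_mem Aas 0⟩ : (Cl 5)ˣ) : Cl 5) =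
          CliffordAlgebra.ι (Qstd 5) (Pi.single 2 1) *
            CliffordAlgebra.ι (Qstd 5) (Pi.single 3 1) ∨
        ((ε ⟨sgen Aas 0, sgen_mem Aas 0⟩ : (Cl 5)ˣ) : Cl 5) =
          -(CliffordAlgebra.ι (Qstd 5) (Pi.single 2 1) *
            CliffordAlgebra.ι (Qstd 5) (Pi.single 3 1))) ∧
      (((ε ⟨sgen Aas 1, sgen_mem Aas 1⟩ : (Cl 5)ˣ) : Cl 5) =
          CliffordAlgebra.ι (Qstd 5) (Pi.single 3 1) *
            CliffordAlgebra.ι (Qstd 5) (Pi.single 4 1) ∨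
        ((ε ⟨sgen Aas 1, sgen_mem Aas 1⟩ : (Cl 5)ˣ) : Cl 5) =
          -(CliffordAlgebra.ι (Qstd 5) (Pi.single 3 1) *
            CliffordAlgebra.ι (Qstd 5) (Pi.single 4 1))) := by
  rintro ⟨ε, h1, h2⟩
  set a := CliffordAlgebra.ι (Qstd 5) (Pi.single (2 : Fin 5) 1) with ha
  set b := CliffordAlgebra.ι (Qstd 5) (Pi.single (3 : Fin 5) 1) with hb
  set c := CliffordAlgebra.ι (Qstd 5) (Pi.single (4 : Fin 5) 1) with hc
  set u := ((ε ⟨sgen Aas 0, sgen_mem Aas 0⟩ : (Cl 5)ˣ) : Cl 5) with hu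
  set v := ((ε ⟨sgen Aas 1, sgen_mem Aas 1⟩ : (Cl 5)ˣ) : Cl 5) with hv
  have hcomm : u * v = v * u := by
    have heq : (⟨sgen Aas 0, sgen_mem Aas 0⟩ : BottGroup Aas) * ⟨sgen Aas 1, sgen_mem Aas 1⟩
        = ⟨sgen Aas 1, sgen_mem Aas 1⟩ * ⟨sgen Aas 0, sgen_mem Aas 0⟩ :=
      Subtype.ext sgen_comm
    have h3 := congrArg ε heq
    rw [_root_.map_mul, _root_.map_mul] at h3
    have h4 := congrArg Units.val h3
    rw [Units.val_mul, Units.val_mul] at h4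
    exact h4
  have hab : a * b = -(b * a) := anticomm_single 2 3 (by decide)
  have hbc : b * c = -(c * b) := anticomm_single 3 4 (by decide)
  have hac : a * c = -(c * a) := anticomm_single 2 4 (by decide)
  have hbb : b * b = 1 := sq_single 3
  have calc1 : (a * b) * (b * c) = a * c := by
    rw [show a * b * (b * c) = a * (b * b) * c by noncomm_ring, hbb, mul_one]
  have calc2 : (b * c) * (a * b) = -(a * c) := by
    calc (b * c) * (a * b) = b * (c * a) * b := by noncomm_ring
      _ = -(b * (a * c) * b) := by rw [hac]; noncomm_ring
      _ = -(-(a * b) * (c * b)) := by rw [hab]; noncomm_ring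
      _ = -(-(a * b) * (-(b * c))) := by rw [hbc]; noncomm_ring
      _ = -((a * b) * (b * c)) := by noncomm_ring
      _ = -(a * c) := by rw [calc1]
  have key : u * v = -(v * u) := by
    rcases h1 with h1 | h1 <;> rcases h2 with h2 | h2 <;> rw [h1, h2] <;>
      simp only [mul_neg, neg_mul, neg_neg, calc1, calc2]
  have hsum : u * v + u * v = 0 := by
    nth_rewrite 2 [hcomm]
    rw [key]
    exact neg_add_cancel _
  have hz : u * v = 0 := by
    have h2inv : ((2 : ℝ))⁻¹ • (u * v + u * v) = u * v := by
      rw [← two_smul ℝ, smul_smul]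
      norm_num
    rw [← h2inv, hsum, smul_zero]
  exact Units.ne_zero (ε ⟨sgen Aas 0, sgen_mem Aas 0⟩ * ε ⟨sgen Aas 1, sgen_mem Aas 1⟩)
    (by rw [Units.val_mul]; exact hz)
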